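/- Let d ≥ 2, 1 ≤ p < ∞ and α, β > 0. Let F ⊂ ℝ^{d−1} be a (d−1)-simplex and h > 0, and let T ⊂ ℝ^d be the d-simplex T = conv({0} ∪ { (y, h) : y ∈ F }), i.e., the cone with apex at the origin over the copy of F placed at height h in the last coordinate. Then E_{p;α,β;d}(T)^p ≥ (h / (2p + d)) · E_{p;α,β;d−1}(F)^p, where E_{p;α,β;d}(T)^p = inf over affine u on ℝ^d of ∫_T (α(Q_d−u)₊ + β(Q_d−u)₋)^p dx and E_{p;α,β;d−1}(F)^p = inf over affine ℓ on ℝ^{d−1} of ∫_F (α(Q_{d−1}−ℓ)₊ + β(Q_{d−1}−ℓ)₋)^p dy. -/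

import Mathlib

open MeasureTheory Metric Set Pointwise
set_option maxHeartbeats 1000000

noncomputable def EpabPow (m : ℕ) (p α β : ℝ) (T : Set (EuclideanSpace ℝ (Fin m))) : ℝ :=
  ⨅ (a : EuclideanSpace ℝ (Fin m)) (c : ℝ),
    ∫ x in T,
      (α * max ((∑ j, x j ^ 2) - ((inner ℝ a x : ℝ) + c)) 0 +
        β * max (-((∑ j, x j ^ 2) - ((inner ℝ a x : ℝ) + c))) 0) ^ p

noncomputable def itg (m : ℕ) (p α β : ℝ) (a : EuclideanSpace ℝ (Fin m)) (c : ℝ)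
    (x : EuclideanSpace ℝ (Fin m)) : ℝ :=
  (α * max ((∑ j, x j ^ 2) - ((inner ℝ a x : ℝ) + c)) 0 +
        β * max (-((∑ j, x j ^ 2) - ((inner ℝ a x : ℝ) + c))) 0) ^ p

noncomputable def initE (m : ℕ) (a : EuclideanSpace ℝ (Fin (m + 1))) :
    EuclideanSpace ℝ (Fin m) := WithLp.toLp 2 (fun j => a (Fin.castSucc j))

lemma itg_nonneg {m : ℕ} {p α β : ℝ} (hα : 0 ≤ α) (hβ : 0 ≤ β) (a : EuclideanSpace ℝ (Fin m))
    (c : ℝ) (x : EuclideanSpace ℝ (Fin m)) : 0 ≤ itg m p α β a c x := by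
  unfold itg
  positivity

lemma itg_cont {m : ℕ} {p α β : ℝ} (hp : 0 < p) (a : EuclideanSpace ℝ (Fin m)) (c : ℝ) :
    Continuous (itg m p α β a c) := by
  unfold itg
  have hbase : Continuous (fun x : EuclideanSpace ℝ (Fin m) =>
      α * max ((∑ j, x j ^ 2) - ((inner ℝ a x : ℝ) + c)) 0 +
        β * max (-((∑ j, x j ^ 2) - ((inner ℝ a x : ℝ) + c))) 0) := by
    have h1 : Continuous (fun x : EuclideanSpace ℝ (Fin m) => (∑ j, x j ^ 2 : ℝ)) := by
      exact continuous_finset_sum _ fun j _ =>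
        ((continuous_apply j).comp (PiLp.continuous_ofLp 2 fun _ : Fin m => ℝ)).pow 2
    have h2 : Continuous (fun x : EuclideanSpace ℝ (Fin m) => (inner ℝ a x : ℝ)) :=
      continuous_const.inner continuous_id
    exact ((continuous_const.mul ((h1.sub (h2.add continuous_const)).max continuous_const)).add
      (continuous_const.mul (((h1.sub (h2.add continuous_const)).neg).max continuous_const)))
  have hr : Continuous fun y : ℝ => y ^ p := by
    rw [continuous_iff_continuousAt]
    exact fun y => Real.continuousAt_rpow_const y p (Or.inr hp.le)
  exact hr.comp hbase

lemma EpabPow_eq (m : ℕ) (p α β : ℝ) (F : Set (EuclideanSpace ℝ (Fin m))) :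
    EpabPow m p α β F = ⨅ (a : EuclideanSpace ℝ (Fin m)) (c : ℝ), ∫ x in F, itg m p α β a c x :=
  rfl

lemma EpabPow_le {m : ℕ} {p α β : ℝ} (hα : 0 ≤ α) (hβ : 0 ≤ β)
    (F : Set (EuclideanSpace ℝ (Fin m))) (a : EuclideanSpace ℝ (Fin m)) (c : ℝ) :
    EpabPow m p α β F ≤ ∫ x in F, itg m p α β a c x := by
  rw [EpabPow_eq]
  have hnn : ∀ (a' : EuclideanSpace ℝ (Fin m)) (c' : ℝ),
      0 ≤ ∫ x in F, itg m p α β a' c' x := fun a' c' =>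
    integral_nonneg fun x => itg_nonneg hα hβ a' c' x
  refine le_trans (ciInf_le ⟨0, ?_⟩ a) (ciInf_le ⟨0, ?_⟩ c)
  · rintro y ⟨a', rfl⟩
    exact Real.iInf_nonneg fun c' => hnn a' c'
  · rintro y ⟨c', rfl⟩
    exact hnn a c'

lemma EpabPow_nonneg {m : ℕ} {p α β : ℝ} (hα : 0 ≤ α) (hβ : 0 ≤ β)
    (F : Set (EuclideanSpace ℝ (Fin m))) : 0 ≤ EpabPow m p α β F := by
  rw [EpabPow_eq]
  exact Real.iInf_nonneg fun a => Real.iInf_nonneg fun c =>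
    integral_nonneg fun x => itg_nonneg hα hβ a c x

noncomputable def snocAff (m : ℕ) (h : ℝ) :
    EuclideanSpace ℝ (Fin m) →ᵃ[ℝ] EuclideanSpace ℝ (Fin (m + 1)) :=
  AffineMap.mk' (fun y => (WithLp.toLp 2 (Fin.snoc (α := fun _ => ℝ) (fun i => y i) h : Fin (m + 1) → ℝ) : EuclideanSpace ℝ (Fin (m + 1))))
    { toFun := fun y => (WithLp.toLp 2 (Fin.snoc (α := fun _ => ℝ) (fun i => y i) 0 : Fin (m + 1) → ℝ) : EuclideanSpace ℝ (Fin (m + 1)))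
      map_add' := by
        intro y z
        ext j
        refine Fin.lastCases ?_ (fun i => ?_) j <;>
          simp [PiLp.add_apply, PiLp.toLp_apply, Fin.snoc_castSucc, Fin.snoc_last]
      map_smul' := by
        intro r y
        ext j
        refine Fin.lastCases ?_ (fun i => ?_) j <;>
          simp [PiLp.smul_apply, PiLp.toLp_apply, Fin.snoc_castSucc, Fin.snoc_last] }
    0 (by
      intro y
      ext j
      refine Fin.lastCases ?_ (fun i => ?_) j <;>
        simp [PiLp.add_apply, PiLp.toLp_apply, Fin.snoc_castSucc, Fin.snoc_last])

lemma mem_coneT_iff {m : ℕ} {h : ℝ} (hh : 0 < h) {F : Set (EuclideanSpace ℝ (Fin m))}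
    (hFc : Convex ℝ F) (hFne : F.Nonempty) {t : ℝ} (ht0 : 0 < t) (hth : t ≤ h)
    (y : Fin m → ℝ) :
    (WithLp.toLp 2 (Fin.snoc (α := fun _ => ℝ) y t : Fin (m + 1) → ℝ) : EuclideanSpace ℝ (Fin (m + 1))) ∈ convexHull ℝ
      ({0} ∪ (fun y : EuclideanSpace ℝ (Fin m) =>
        (WithLp.toLp 2 (Fin.snoc (α := fun _ => ℝ) (fun i => y i) h : Fin (m + 1) → ℝ) : EuclideanSpace ℝ (Fin (m + 1)))) '' F) ↔
      ∃ z ∈ F, ∀ j, y j = (t / h) * z j := by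
  have hX : Convex ℝ ((fun y : EuclideanSpace ℝ (Fin m) =>
      (WithLp.toLp 2 (Fin.snoc (α := fun _ => ℝ) (fun i => y i) h : Fin (m + 1) → ℝ) : EuclideanSpace ℝ (Fin (m + 1)))) '' F) := by
    have : (fun y : EuclideanSpace ℝ (Fin m) =>
        (WithLp.toLp 2 (Fin.snoc (α := fun _ => ℝ) (fun i => y i) h : Fin (m + 1) → ℝ) : EuclideanSpace ℝ (Fin (m + 1)))) '' F = (snocAff m h) '' F := rfl
    rw [this]
    exact hFc.affine_image _
  have hXne : ((fun y : EuclideanSpace ℝ (Fin m) =>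
      (WithLp.toLp 2 (Fin.snoc (α := fun _ => ℝ) (fun i => y i) h : Fin (m + 1) → ℝ) : EuclideanSpace ℝ (Fin (m + 1)))) '' F).Nonempty := hFne.image _
  rw [singleton_union, convexHull_insert hXne, hX.convexHull_eq, mem_convexJoin]
  constructor
  · rintro ⟨a, ha, b, ⟨z, hz, rfl⟩, hseg⟩
    rw [mem_singleton_iff] at ha; subst ha
    rw [segment_eq_image] at hseg
    obtain ⟨θ, hθ, hx⟩ := hseg
    have hx' : ∀ j, θ * (Fin.snoc (α := fun _ => ℝ) (fun i => z i) h : Fin (m+1) → ℝ) j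
        = (Fin.snoc (α := fun _ => ℝ) y t : Fin (m+1) → ℝ) j := by
      intro j
      have := congrArg (fun v => v j) hx
      simpa [PiLp.add_apply, PiLp.smul_apply, smul_eq_mul] using this
    have hlast := hx' (Fin.last m)
    simp [Fin.snoc_last] at hlast
    have hθt : θ = t / h := by field_simp; linarith [hlast]
    refine ⟨z, hz, fun j => ?_⟩
    have := hx' j.castSucc
    simp [Fin.snoc_castSucc] at this
    rw [← this, hθt]
  · rintro ⟨z, hz, hy⟩
    refine ⟨0, mem_singleton 0, _, ⟨z, hz, rfl⟩, ?_⟩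
    rw [segment_eq_image]
    refine ⟨t / h, ⟨by positivity, by rw [div_le_one hh]; exact hth⟩, ?_⟩
    ext j
    refine Fin.lastCases ?_ (fun i => ?_) j
    · simp [PiLp.add_apply, PiLp.smul_apply, Fin.snoc_last, smul_eq_mul]
      field_simp
    · simp [PiLp.add_apply, PiLp.smul_apply, Fin.snoc_castSucc, smul_eq_mul]
      exact (hy i).symm

lemma itg_snoc {m : ℕ} {p α β : ℝ} (hα : 0 ≤ α) (hβ : 0 ≤ β)
    (a : EuclideanSpace ℝ (Fin (m + 1))) (c t s : ℝ) (hs : 0 < s)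
    (z : EuclideanSpace ℝ (Fin m)) :
    itg (m + 1) p α β a c (WithLp.toLp 2 (Fin.snoc (α := fun _ => ℝ) (WithLp.ofLp (s • z)) t : Fin (m + 1) → ℝ)) =
      (s ^ 2) ^ p * itg m p α β (s⁻¹ • initE m a)
        ((a (Fin.last m) * t + c - t ^ 2) / s ^ 2) z := by
  unfold itg
  set x : EuclideanSpace ℝ (Fin (m + 1)) :=
    (WithLp.toLp 2 (Fin.snoc (α := fun _ => ℝ) (WithLp.ofLp (s • z)) t : Fin (m + 1) → ℝ)) with hx
  set P : ℝ := ∑ j, z j ^ 2 with hP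
  set A : ℝ := ∑ j : Fin m, a (Fin.castSucc j) * z j with hA
  have hxc : ∀ j : Fin m, x (Fin.castSucc j) = s * z j := by
    intro j; simp [hx, Fin.snoc_castSucc, PiLp.smul_apply, smul_eq_mul]
  have hxl : x (Fin.last m) = t := by simp [hx, Fin.snoc_last]
  have hinner : (inner ℝ a x : ℝ) = s * A + a (Fin.last m) * t := by
    rw [PiLp.inner_apply]
    simp only [RCLike.inner_apply, starRingEnd_apply, star_trivial]
    rw [Fin.sum_univ_castSucc, hxl, hA, Finset.mul_sum]
    congr 1
    exact Finset.sum_congr rfl fun j _ => by rw [hxc j]; ring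
    ring
  have hsum : (∑ j, x j ^ 2) = s ^ 2 * P + t ^ 2 := by
    rw [Fin.sum_univ_castSucc, hxl, hP, Finset.mul_sum]
    congr 1
    exact Finset.sum_congr rfl fun j _ => by rw [hxc j]; ring
  have hinner2 : (inner ℝ (s⁻¹ • initE m a) z : ℝ) = s⁻¹ * A := by
    rw [PiLp.inner_apply]
    simp only [RCLike.inner_apply, starRingEnd_apply, star_trivial, PiLp.smul_apply,
      smul_eq_mul, initE]
    rw [hA, Finset.mul_sum]
    exact Finset.sum_congr rfl fun j _ => by ring
  have hD : (∑ j, x j ^ 2) - ((inner ℝ a x : ℝ) + c)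
      = s ^ 2 * (P - ((inner ℝ (s⁻¹ • initE m a) z : ℝ)
          + (a (Fin.last m) * t + c - t ^ 2) / s ^ 2)) := by
    rw [hinner, hsum, hinner2]
    have hs2 : (s : ℝ) ^ 2 ≠ 0 := by positivity
    field_simp
    ring
  rw [hD]
  set D' : ℝ := P - ((inner ℝ (s⁻¹ • initE m a) z : ℝ)
      + (a (Fin.last m) * t + c - t ^ 2) / s ^ 2) with hD'
  have hs2 : (0:ℝ) ≤ s ^ 2 := sq_nonneg s
  have hmax1 : max (s ^ 2 * D') 0 = s ^ 2 * max D' 0 := by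
    rw [mul_max_of_nonneg _ _ hs2, mul_zero]
  have hmax2 : max (-(s ^ 2 * D')) 0 = s ^ 2 * max (-D') 0 := by
    rw [← mul_neg, mul_max_of_nonneg _ _ hs2, mul_zero]
  rw [hmax1, hmax2]
  have hring : α * (s ^ 2 * max D' 0) + β * (s ^ 2 * max (-D') 0)
      = s ^ 2 * (α * max D' 0 + β * max (-D') 0) := by ring
  rw [hring, Real.mul_rpow hs2 (by positivity)]

/-- For the cone `T ⊂ ℝ^d` (`d = m + 1 ≥ 2`) with apex at the origin over a copy of a
`(d-1)`-simplex `F ⊂ ℝ^{d-1}` placed at height `h > 0` in the last coordinate, the `p`-th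
power of the asymmetric `L_p`-error of best affine approximation of `Q` on `T` is at
least `h / (2p + d)` times the corresponding `p`-th power of the error on `F`. -/
theorem cone_error_lower_bound
    (m : ℕ) (hm : 1 ≤ m) (p α β : ℝ) (hp : 1 ≤ p) (hα : 0 < α) (hβ : 0 < β)
    (w : Fin (m + 1) → EuclideanSpace ℝ (Fin m))
    (hw : AffineIndependent ℝ w)
    (h : ℝ) (hh : 0 < h)
    (F : Set (EuclideanSpace ℝ (Fin m)))
    (hF : F = convexHull ℝ (Set.range w))
    (T : Set (EuclideanSpace ℝ (Fin (m + 1))))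
    (hT : T = convexHull ℝ
      ({0} ∪ (fun y : EuclideanSpace ℝ (Fin m) =>
        (WithLp.toLp 2 (Fin.snoc (α := fun _ => ℝ) (fun i => y i) h : Fin (m + 1) → ℝ) : EuclideanSpace ℝ (Fin (m + 1)))) '' F)) :
    EpabPow (m + 1) p α β T ≥ (h / (2 * p + (m + 1))) * EpabPow m p α β F := by
  have hp0 : 0 < p := lt_of_lt_of_le one_pos hp
  set q : ℝ := (m : ℝ) + 2 * p with hq
  have hq0 : 0 < q := by positivity
  have hq1 : (-1 : ℝ) < q := by linarith
  have hq1' : q + 1 ≠ 0 := by positivity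
  have hFconv : Convex ℝ F := hF ▸ convex_convexHull ℝ _
  have hFne : F.Nonempty := hF ▸ ⟨w 0, subset_convexHull ℝ _ ⟨0, rfl⟩⟩
  have hFcomp : IsCompact F := hF ▸ (Set.finite_range w).isCompact_convexHull ℝ
  have hTcomp : IsCompact T := by
    have himg : (fun y : EuclideanSpace ℝ (Fin m) =>
        (WithLp.toLp 2 (Fin.snoc (α := fun _ => ℝ) (fun i => y i) h : Fin (m + 1) → ℝ) : EuclideanSpace ℝ (Fin (m + 1)))) '' F = (snocAff m h) '' F := rfl
    have hTK : T = convexHull ℝ ({0} ∪ ⇑(snocAff m h) '' Set.range w) := by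
      rw [hT, himg]
      apply Subset.antisymm
      · apply convexHull_min _ (convex_convexHull ℝ _)
        apply union_subset
        · exact subset_trans subset_union_left (subset_convexHull ℝ _)
        · have himg2 : ⇑(snocAff m h) '' F = convexHull ℝ (⇑(snocAff m h) '' Set.range w) := by
            rw [hF, AffineMap.image_convexHull]
          rw [himg2]
          exact convexHull_mono subset_union_right
      · apply convexHull_min _ (convex_convexHull ℝ _)
        apply union_subset
        · exact subset_trans subset_union_left (subset_convexHull ℝ _)
        · refine subset_trans ?_ (subset_convexHull ℝ _)
          refine subset_trans (Set.image_mono ?_) subset_union_right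
          rw [hF]
          exact subset_convexHull ℝ _
    rw [hTK]
    exact (Set.Finite.union (finite_singleton 0)
      ((Set.finite_range w).image _)).isCompact_convexHull ℝ
  have hTmeas : MeasurableSet T := hTcomp.isClosed.measurableSet
  set E : ℝ := EpabPow m p α β F with hE
  have hE0 : 0 ≤ E := EpabPow_nonneg hα.le hβ.le F
  rw [ge_iff_le, EpabPow_eq]
  refine le_ciInf fun a => le_ciInf fun c => ?_
  set gT := itg (m + 1) p α β a c with hgT
  -- the measurable equivalence
  set f : EuclideanSpace ℝ (Fin (m + 1)) ≃ᵐ ℝ × (Fin m → ℝ) :=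
    ((MeasurableEquiv.toLp 2 (Fin (m + 1) → ℝ)).symm).trans
      (MeasurableEquiv.piFinSuccAbove (fun _ => ℝ) (Fin.last m)) with hfdef
  have hfmp : MeasurePreserving f volume volume :=
    (EuclideanSpace.volume_preserving_symm_measurableEquiv_toLp _).trans
      (volume_preserving_piFinSuccAbove (fun _ => ℝ) (Fin.last m))
  have hfsymm : ∀ ty : ℝ × (Fin m → ℝ),
      f.symm ty = (WithLp.toLp 2 (Fin.snoc (α := fun _ => ℝ) ty.2 ty.1 : Fin (m + 1) → ℝ) : EuclideanSpace ℝ (Fin (m + 1))) := by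
    intro ty
    show ((MeasurableEquiv.toLp 2 (Fin (m + 1) → ℝ)).symm).symm
      ((MeasurableEquiv.piFinSuccAbove (fun _ => ℝ) (Fin.last m)).symm ty) = _
    have h1 : (MeasurableEquiv.piFinSuccAbove (fun _ : Fin (m+1) => ℝ) (Fin.last m)).symm ty
        = Fin.snoc ty.2 ty.1 := by
      show (Fin.insertNthEquiv (fun _ : Fin (m+1) => ℝ) (Fin.last m)) ty = _
      simp [Fin.insertNthEquiv, Fin.insertNth_last']
    rw [h1]
    rfl
  have hint0 : IntegrableOn gT T := (itg_cont hp0 a c).continuousOn.integrableOn_compact hTcomp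
  have hint1 : Integrable (T.indicator gT) := (integrable_indicator_iff hTmeas).2 hint0
  set Sind : ℝ × (Fin m → ℝ) → ℝ := (T.indicator gT) ∘ f.symm with hSind
  have hint2 : Integrable Sind volume :=
    ((hfmp.symm f).integrable_comp_emb f.symm.measurableEmbedding).2 hint1
  have hSnn : ∀ ty, 0 ≤ Sind ty := by
    intro ty
    exact Set.indicator_nonneg (fun x _ => itg_nonneg hα.le hβ.le a c x) _
  have hstep1 : ∫ x in T, gT x = ∫ ty, Sind ty := by
    rw [← integral_indicator hTmeas]
    exact ((hfmp.symm f).integral_comp f.symm.measurableEmbedding (T.indicator gT)).symm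
  have hvol : (volume : Measure (ℝ × (Fin m → ℝ))) = (volume : Measure ℝ).prod volume :=
    Measure.volume_eq_prod ℝ (Fin m → ℝ)
  set Φ : ℝ → ℝ := fun t => ∫ y, Sind (t, y) with hΦ
  have hstep2 : ∫ ty, Sind ty = ∫ t, Φ t := by
    rw [hvol] at hint2 ⊢
    exact integral_prod _ hint2
  have hΦint : Integrable Φ := by
    rw [hvol] at hint2
    exact hint2.integral_prod_left
  have hΦnn : ∀ t, 0 ≤ Φ t := fun t => integral_nonneg fun y => hSnn (t, y)
  set ψ : ℝ → ℝ := (Ioc 0 h).indicator (fun t => (t / h) ^ q * E) with hψ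
  have hrq : Continuous fun y : ℝ => y ^ q := by
    rw [continuous_iff_continuousAt]
    exact fun y => Real.continuousAt_rpow_const y q (Or.inr hq0.le)
  have hψint : Integrable ψ := by
    rw [hψ, ← integrableOn_iff_integrable_of_support_subset Set.support_indicator_subset]
    refine (IntegrableOn.congr_fun ?_ (fun t ht => (Set.indicator_of_mem ht _).symm)
      measurableSet_Ioc)
    exact ((hrq.comp (continuous_id.div_const h)).mul continuous_const).integrableOn_Ioc
  have hψle : ∀ t, ψ t ≤ Φ t := by
    intro t
    by_cases ht : t ∈ Ioc 0 h
    swap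
    · rw [hψ, Set.indicator_of_notMem ht]
      exact hΦnn t
    obtain ⟨ht0, hth⟩ := ht
    set s : ℝ := t / h with hsdef
    have hs0 : 0 < s := div_pos ht0 hh
    -- the slice of the cone at height t
    have hslice : ∀ y : Fin m → ℝ, ((t, y) ∈ f.symm ⁻¹' T) ↔
        ∃ z ∈ F, ∀ j, y j = s * z j := by
      intro y
      rw [Set.mem_preimage, hfsymm, hT]
      exact mem_coneT_iff hh hFconv hFne ht0 hth y
    have hsF : (s • F : Set (EuclideanSpace ℝ (Fin m))) =
        (fun z : EuclideanSpace ℝ (Fin m) => s • z) '' F := rfl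
    have hsFcomp : IsCompact (s • F) := by
      rw [hsF]; exact hFcomp.image (continuous_const_smul s)
    have hsFmeas : MeasurableSet (s • F) := hsFcomp.isClosed.measurableSet
    -- identify the slice indicator
    set e1 : EuclideanSpace ℝ (Fin m) ≃ᵐ (Fin m → ℝ) := (MeasurableEquiv.toLp 2 (Fin m → ℝ)).symm
      with he1
    have he1mp : MeasurePreserving e1 volume volume :=
      EuclideanSpace.volume_preserving_symm_measurableEquiv_toLp _
    have hsliceset : {y : Fin m → ℝ | (t, y) ∈ f.symm ⁻¹' T} = e1.symm ⁻¹' (s • F) := by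
      ext y
      rw [Set.mem_setOf_eq, hslice y, Set.mem_preimage]
      constructor
      · rintro ⟨z, hz, hyz⟩
        refine ⟨z, hz, ?_⟩
        ext j
        exact (hyz j).symm
      · rintro ⟨z, hz, hzy⟩
        exact ⟨z, hz, fun j => (congrArg (fun v => v j) hzy).symm⟩
    have hindic : (fun y : Fin m → ℝ => Sind (t, y)) =
        (e1.symm ⁻¹' (s • F)).indicator (fun y => gT (f.symm (t, y))) := by
      funext y
      rw [hSind]
      show (f.symm ⁻¹' T).indicator (gT ∘ f.symm) (t, y) = _
      by_cases hy : (t, y) ∈ f.symm ⁻¹' T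
      · rw [Set.indicator_of_mem hy, Set.indicator_of_mem (by
          rw [← Set.mem_setOf_eq (p := fun y => (t, y) ∈ f.symm ⁻¹' T), hsliceset] at hy
          exact hy)]
        rfl
      · rw [Set.indicator_of_notMem hy, Set.indicator_of_notMem (by
          intro hcon
          apply hy
          have : y ∈ {y : Fin m → ℝ | (t, y) ∈ f.symm ⁻¹' T} := by rw [hsliceset]; exact hcon
          exact this)]
    have hΦt : Φ t = ∫ y in e1.symm ⁻¹' (s • F), gT (f.symm (t, y)) := by
      rw [hΦ]
      simp only
      rw [hindic, integral_indicator (e1.symm.measurable hsFmeas)]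
    have himgpre : e1.symm ⁻¹' (s • F) = e1 '' (s • F) := (e1.toEquiv.image_eq_preimage_symm _).symm
    have hΦt2 : Φ t = ∫ z in s • F, gT (f.symm (t, e1 z)) := by
      rw [hΦt, himgpre]
      exact he1mp.setIntegral_image_emb e1.measurableEmbedding _ _
    -- scaling change of variables
    have hscale : ∫ z in F, gT (f.symm (t, e1 (s • z))) =
        |(s ^ Module.finrank ℝ (EuclideanSpace ℝ (Fin m)))⁻¹| • ∫ z in s • F, gT (f.symm (t, e1 z)) := by
      exact Measure.setIntegral_comp_smul volume (fun z => gT (f.symm (t, e1 z))) F hs0.ne'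
    have hfr : Module.finrank ℝ (EuclideanSpace ℝ (Fin m)) = m := finrank_euclideanSpace_fin
    -- pointwise value
    have hptwise : ∀ z : EuclideanSpace ℝ (Fin m), gT (f.symm (t, e1 (s • z))) =
        (s ^ 2) ^ p * itg m p α β (s⁻¹ • initE m a)
          ((a (Fin.last m) * t + c - t ^ 2) / s ^ 2) z := by
      intro z
      rw [hgT, hfsymm]
      exact itg_snoc hα.le hβ.le a c t s hs0 z
    have hinner_int : ∫ z in F, gT (f.symm (t, e1 (s • z))) =
        (s ^ 2) ^ p * ∫ z in F, itg m p α β (s⁻¹ • initE m a)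
          ((a (Fin.last m) * t + c - t ^ 2) / s ^ 2) z := by
      rw [← integral_const_mul]
      exact setIntegral_congr_fun hFcomp.isClosed.measurableSet fun z _ => hptwise z
    have hEle : E ≤ ∫ z in F, itg m p α β (s⁻¹ • initE m a)
        ((a (Fin.last m) * t + c - t ^ 2) / s ^ 2) z := EpabPow_le hα.le hβ.le F _ _
    have hΦval : Φ t = s ^ m * ((s ^ 2) ^ p * ∫ z in F, itg m p α β (s⁻¹ • initE m a)
        ((a (Fin.last m) * t + c - t ^ 2) / s ^ 2) z) := by
      rw [hΦt2]
      rw [hinner_int] at hscale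
      rw [hfr] at hscale
      have habs : |((s : ℝ) ^ m)⁻¹| = (s ^ m)⁻¹ := by
        rw [abs_of_nonneg]; positivity
      rw [habs, smul_eq_mul] at hscale
      have hsm : (0:ℝ) < s ^ m := by positivity
      field_simp at hscale ⊢
      linarith [hscale]
    have hψt : ψ t = s ^ q * E :=
      Set.indicator_of_mem (Set.mem_Ioc.mpr ⟨ht0, hth⟩) _
    have hsq : s ^ (m : ℕ) * (s ^ 2) ^ p = s ^ q := by
      rw [← Real.rpow_natCast s m, ← Real.rpow_natCast s 2, ← Real.rpow_mul hs0.le,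
        ← Real.rpow_add hs0, hq]
      norm_num
    rw [hψt, hΦval]
    calc s ^ q * E = s ^ m * ((s ^ 2) ^ p * E) := by rw [← hsq]; ring
    _ ≤ s ^ m * ((s ^ 2) ^ p * ∫ z in F, itg m p α β (s⁻¹ • initE m a)
        ((a (Fin.last m) * t + c - t ^ 2) / s ^ 2) z) := by
      have h1 : (0:ℝ) ≤ s ^ m := by positivity
      have h2 : (0:ℝ) ≤ (s ^ 2) ^ p := by positivity
      exact mul_le_mul_of_nonneg_left (mul_le_mul_of_nonneg_left hEle h2) h1
  have hψval : ∫ t, ψ t = h / (2 * p + (m + 1)) * E := by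
    rw [hψ, integral_indicator measurableSet_Ioc,
      ← intervalIntegral.integral_of_le hh.le, intervalIntegral.integral_mul_const]
    have hcomp : (∫ t in (0:ℝ)..h, (t / h) ^ q) = h • ∫ u in (0:ℝ)/h..h/h, u ^ q :=
      intervalIntegral.integral_comp_div (fun u => u ^ q) hh.ne'
    rw [hcomp, zero_div, div_self hh.ne']
    rw [integral_rpow (Or.inl hq1)]
    rw [Real.one_rpow, Real.zero_rpow hq1']
    rw [smul_eq_mul]
    have h21 : (2 * p + ((m : ℝ) + 1)) = q + 1 := by rw [hq]; ring
    rw [h21]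
    ring
  have hmono := integral_mono hψint hΦint hψle
  rw [hψval] at hmono
  rw [hstep1, hstep2]
  exact hmono
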